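/- With notation as above, if λ = 0 then φ is surjective if and only if (μ ≠ 0 and 1 ∈ J) or J = ℕ*. -/

import Mathlib

/-- Rooted trees with vertices decorated by `D` (a root decoration and a list of subtrees). -/
inductive RT (D : Type*) : Type _
  | node : D → List (RT D) → RT D

namespace RT

variable {D : Type*}

mutual
  /-- The degree of a decorated rooted tree: the sum of the (positive integer) degrees of
  the decorations of its vertices. -/
  def degN (w : D → ℕ+) : RT D → ℕ
    | .node j c => (w j : ℕ) + degListN w c
  /-- Sum of degrees of a list of trees. -/
  def degListN (w : D → ℕ+) : List (RT D) → ℕ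
    | [] => 0
    | t :: ts => degN w t + degListN w ts
end

theorem degN_pos (w : D → ℕ+) : ∀ t : RT D, 0 < degN w t
  | .node j c => by
      rw [degN]
      exact Nat.lt_of_lt_of_le (w j).2 (Nat.le_add_right _ _)

/-- The degree of a decorated rooted tree, as a positive integer. -/
def deg (w : D → ℕ+) (t : RT D) : ℕ+ := ⟨degN w t, degN_pos w t⟩

mutual
  /-- The list of all graftings of the tree `t` on the vertices of the tree `s`. -/
  def graftings (t : RT D) : RT D → List (RT D)
    | .node j c => RT.node j (t :: c) :: (graftingsList t c).map fun c' => RT.node j c'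
  /-- All ways to graft `t` on a vertex of one of the trees of a list (forest). -/
  def graftingsList (t : RT D) : List (RT D) → List (List (RT D))
    | [] => []
    | s :: rest => ((graftings t s).map fun s' => s' :: rest) ++
        ((graftingsList t rest).map fun rest' => s :: rest')
end

end RT

/-- The pre-Lie product of the free pre-Lie algebra `g_CK^J` on rooted trees decorated by `J`
(`t ∘ t' = Σ` of all graftings of `t` on the vertices of `t'`), extended bilinearly to the span
of trees. -/
noncomputable def gprod {D : Type*} (K : Type*) [Field K] (x y : RT D →₀ K) : RT D →₀ K :=
  x.sum fun t a => y.sum fun s b =>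
    (a * b) • ((RT.graftings t s).map fun u => Finsupp.single u (1 : K)).sum

/-- The Faà di Bruno pre-Lie algebra: basis `(e_i)_{i≥1}`, product
`e_i ∘ e_j = (λ j − μ) e_{i+j}`. -/
noncomputable def fdbMul (K : Type*) [Field K] (lam mu : K) (x y : ℕ+ →₀ K) : ℕ+ →₀ K :=
  x.sum fun i a => y.sum fun j b => Finsupp.single (i + j) (a * b * (lam * ((j : ℕ) : K) - mu))


namespace RT

variable {D : Type*}


mutual
  def nv : RT D → ℕ
    | .node _ c => 1 + nvList c
  def nvList : List (RT D) → ℕ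
    | [] => 0
    | t :: ts => nv t + nvList ts
end

mutual
  def ds : RT D → ℕ
    | .node _ c => dsList c
  def dsList : List (RT D) → ℕ
    | [] => 0
    | t :: ts => ds t + nv t + dsList ts
end

theorem nv_pos : ∀ t : RT D, 0 < nv t
  | .node _ c => by rw [nv]; omega

mutual
  theorem ds_le : ∀ t : RT D, ds t + nv t ≤ nv t * nv t
    | .node j c => by
        have h := dsList_le c
        rw [ds, nv]
        nlinarith [h]
  theorem dsList_le : ∀ c : List (RT D), dsList c ≤ nvList c * nvList c
    | [] => by rw [dsList, nvList]
    | t :: ts => by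
        have h1 := ds_le t
        have h2 := dsList_le ts
        rw [dsList, nvList]
        nlinarith [h1, h2]
end

mutual
  theorem nv_graftings (t : RT D) : ∀ s : RT D, ∀ u ∈ graftings t s, nv u = nv t + nv s
    | .node j c => by
        intro u hu
        rw [graftings, List.mem_cons] at hu
        rcases hu with hu | hu
        · subst hu; rw [nv, nv, nvList]; ring
        · rw [List.mem_map] at hu
          obtain ⟨c', hc', rfl⟩ := hu
          rw [nv, nv, nvList_graftingsList t c c' hc']
          ring
  theorem nvList_graftingsList (t : RT D) :
      ∀ c : List (RT D), ∀ c' ∈ graftingsList t c, nvList c' = nv t + nvList c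
    | [] => by intro c' hc'; rw [graftingsList] at hc'; simp at hc'
    | s :: rest => by
        intro c' hc'
        rw [graftingsList] at hc'
        rw [List.mem_append, List.mem_map, List.mem_map] at hc'
        rcases hc' with ⟨s', hs', rfl⟩ | ⟨rest', hr', rfl⟩
        · rw [nvList, nvList, nv_graftings t s s' hs']; ring
        · rw [nvList, nvList, nvList_graftingsList t rest rest' hr']; ring
end

mutual
  theorem degN_graftings (w : D → ℕ+) (t : RT D) :
      ∀ s : RT D, ∀ u ∈ graftings t s, degN w u = degN w t + degN w s
    | .node j c => by
        intro u hu
        rw [graftings, List.mem_cons] at hu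
        rcases hu with hu | hu
        · subst hu; rw [degN, degN, degListN]; ring
        · rw [List.mem_map] at hu
          obtain ⟨c', hc', rfl⟩ := hu
          rw [degN, degN, degListN_graftingsList w t c c' hc']
          ring
  theorem degListN_graftingsList (w : D → ℕ+) (t : RT D) :
      ∀ c : List (RT D), ∀ c' ∈ graftingsList t c, degListN w c' = degN w t + degListN w c
    | [] => by intro c' hc'; rw [graftingsList] at hc'; simp at hc'
    | s :: rest => by
        intro c' hc'
        rw [graftingsList] at hc'
        rw [List.mem_append, List.mem_map, List.mem_map] at hc'
        rcases hc' with ⟨s', hs', rfl⟩ | ⟨rest', hr', rfl⟩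
        · rw [degListN, degListN, degN_graftings w t s s' hs']; ring
        · rw [degListN, degListN, degListN_graftingsList w t rest rest' hr']; ring
end

mutual
  theorem ds_graftings (t : RT D) :
      ∀ s : RT D, ∀ u ∈ graftings t s, ds s + ds t + nv t ≤ ds u
    | .node j c => by
        intro u hu
        rw [graftings, List.mem_cons] at hu
        rcases hu with hu | hu
        · subst hu; rw [ds, ds, dsList]; omega
        · rw [List.mem_map] at hu
          obtain ⟨c', hc', rfl⟩ := hu
          have := dsList_graftingsList t c c' hc'
          rw [ds, ds]; omega
  theorem dsList_graftingsList (t : RT D) :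
      ∀ c : List (RT D), ∀ c' ∈ graftingsList t c, dsList c + ds t + 2 * nv t ≤ dsList c'
    | [] => by intro c' hc'; rw [graftingsList] at hc'; simp at hc'
    | s :: rest => by
        intro c' hc'
        rw [graftingsList] at hc'
        rw [List.mem_append, List.mem_map, List.mem_map] at hc'
        rcases hc' with ⟨s', hs', rfl⟩ | ⟨rest', hr', rfl⟩
        · have h1 := ds_graftings t s s' hs'
          have h2 := nv_graftings t s s' hs'
          rw [dsList, dsList]; omega
        · have h1 := dsList_graftingsList t rest rest' hr'
          rw [dsList, dsList]; omega
end

/-- Induction measure. -/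
def msr (t : RT D) : ℕ := nv t ^ 3 + (nv t ^ 2 - ds t)

theorem msr_lt_of_nv_lt {a b : RT D} (h : nv a < nv b) : msr a < msr b := by
  have ha := ds_le a
  have hb := nv_pos b
  unfold msr
  have h1 : nv a ^ 3 + (nv a ^ 2 - ds a) ≤ nv a ^ 3 + nv a ^ 2 := by omega
  have h2 : nv a ^ 3 + nv a ^ 2 < nv b ^ 3 := by
    calc nv a ^ 3 + nv a ^ 2 = nv a ^ 2 * (nv a + 1) := by ring
      _ ≤ nv a ^ 2 * nv b := Nat.mul_le_mul_left _ h
      _ < nv b ^ 2 * nv b := (Nat.mul_lt_mul_right hb).mpr (Nat.pow_lt_pow_left h (by norm_num))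
      _ = nv b ^ 3 := by ring
  omega

theorem msr_lt_of_ds {a b : RT D} (hnv : nv a = nv b) (h : ds b < ds a) : msr a < msr b := by
  have ha := ds_le a
  have hp := nv_pos a
  unfold msr
  rw [hnv] at *
  have : ds a ≤ nv b ^ 2 := by nlinarith
  omega

end RT

theorem gprod_single {D : Type*} (K : Type*) [Field K] (t s : RT D) :
    gprod K (Finsupp.single t 1) (Finsupp.single s 1) =
      ((RT.graftings t s).map fun u => Finsupp.single u (1 : K)).sum := by
  unfold gprod
  rw [Finsupp.sum_single_index (by simp), Finsupp.sum_single_index (by simp)]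
  simp

theorem fdbMul_single (K : Type*) [Field K] (lam mu : K) (a b : ℕ+) (x y : K) :
    fdbMul K lam mu (Finsupp.single a x) (Finsupp.single b y) =
      Finsupp.single (a + b) (x * y * (lam * ((b : ℕ) : K) - mu)) := by
  unfold fdbMul
  rw [Finsupp.sum_single_index (by simp), Finsupp.sum_single_index (by simp)]

open RT Finsupp

theorem key_lemma {K : Type*} [Field K] (lam mu : K) (hlam : lam = 0) (J : Set ℕ+)
    (φ : (RT J →₀ K) →ₗ[K] (ℕ+ →₀ K))
    (hgen : ∀ j : J, φ (Finsupp.single (RT.node j []) 1) = Finsupp.single (j : ℕ+) 1)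
    (hmor : ∀ x y : RT J →₀ K, φ (gprod K x y) = fdbMul K lam mu (φ x) (φ y)) :
    ∀ t : RT J, ∃ c : K,
      φ (Finsupp.single t 1) = c • Finsupp.single (RT.deg (fun j : J => (j : ℕ+)) t) 1 ∧
      (1 < RT.nv t → ∃ d : K, c = d * mu) := by
  set w : J → ℕ+ := fun j => (j : ℕ+) with hw
  suffices H : ∀ n : ℕ, ∀ t : RT J, RT.msr t = n → ∃ c : K,
      φ (Finsupp.single t 1) = c • Finsupp.single (RT.deg w t) 1 ∧
      (1 < RT.nv t → ∃ d : K, c = d * mu) by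
    intro t; exact H (RT.msr t) t rfl
  intro n
  induction n using Nat.strong_induction_on with
  | _ n ih =>
    intro t hmsr
    obtain ⟨j, cs⟩ := t
    match cs with
    | [] =>
      refine ⟨1, ?_, ?_⟩
      · rw [one_smul, hgen j]
        congr 1
      · intro h; exfalso; rw [RT.nv, RT.nvList] at h; omega
    | t₀ :: c =>
      subst hmsr
      -- abbreviations
      set s : RT J := RT.node j c with hs
      set tt : RT J := RT.node j (t₀ :: c) with htt
      -- measures
      have hnv_tt : RT.nv tt = 1 + RT.nv t₀ + RT.nvList c := by
        rw [htt, RT.nv, RT.nvList]; omega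
      have hnv_s : RT.nv s = 1 + RT.nvList c := by rw [hs, RT.nv]
      have hnvt₀ := RT.nv_pos t₀
      -- IH for t₀ and s
      obtain ⟨c₀, hc₀, _⟩ := ih (RT.msr t₀)
        (RT.msr_lt_of_nv_lt (by omega)) t₀ rfl
      obtain ⟨cS, hcS, _⟩ := ih (RT.msr s)
        (RT.msr_lt_of_nv_lt (by omega)) s rfl
      -- degree bookkeeping
      have hdeg : RT.deg w t₀ + RT.deg w s = RT.deg w tt := by
        apply PNat.coe_injective
        rw [PNat.add_coe]
        show RT.degN w t₀ + RT.degN w s = RT.degN w tt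
        rw [hs, htt, RT.degN, RT.degN, RT.degListN]
        ring
      -- the sum over deeper graftings
      have hdeep : ∀ l : List (List (RT J)), (∀ c' ∈ l, c' ∈ RT.graftingsList t₀ c) →
          ∃ E d : K,
            (l.map fun c' => φ (Finsupp.single (RT.node j c') 1)).sum
              = E • Finsupp.single (RT.deg w tt) 1 ∧ E = d * mu := by
        intro l
        induction l with
        | nil => intro _; exact ⟨0, 0, by simp, by ring⟩
        | cons a l ihl =>
          intro hmem
          obtain ⟨E, d, hE, hEd⟩ := ihl fun c' hc' => hmem c' (List.mem_cons_of_mem _ hc')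
          have ha : a ∈ RT.graftingsList t₀ c := hmem a List.mem_cons_self
          have hnva : RT.nvList a = RT.nv t₀ + RT.nvList c := RT.nvList_graftingsList t₀ c a ha
          have hdsa := RT.dsList_graftingsList t₀ c a ha
          have hmlt : RT.msr (RT.node j a) < RT.msr tt := by
            apply RT.msr_lt_of_ds
            · rw [RT.nv, RT.nv, hnva, RT.nvList]
            · rw [RT.ds, RT.ds, RT.dsList]
              have := RT.ds_le t₀
              omega
          obtain ⟨ca, hca, hcamu⟩ := ih (RT.msr (RT.node j a)) hmlt (RT.node j a) rfl
          obtain ⟨da, hda⟩ := hcamu (by rw [RT.nv, hnva]; omega)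
          have hdega : RT.deg w (RT.node j a) = RT.deg w tt := by
            apply PNat.coe_injective
            show RT.degN w (RT.node j a) = RT.degN w tt
            rw [htt, RT.degN, RT.degN, RT.degListN,
              RT.degListN_graftingsList w t₀ c a ha]
          refine ⟨ca + E, da + d, ?_, by rw [hda, hEd]; ring⟩
          rw [List.map_cons, List.sum_cons, hE, hca, hdega, add_smul]
      obtain ⟨E, d, hE, hEd⟩ := hdeep (RT.graftingsList t₀ c) (fun _ h => h)
      -- main identity
      have hgr : RT.graftings t₀ s =
          tt :: (RT.graftingsList t₀ c).map fun c' => RT.node j c' := by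
        rw [hs, RT.graftings]
      have hmain : Finsupp.single tt (1 : K) =
          gprod K (Finsupp.single t₀ 1) (Finsupp.single s 1)
            - ((RT.graftingsList t₀ c).map fun c' =>
                Finsupp.single (RT.node j c') (1 : K)).sum := by
        rw [gprod_single, hgr, List.map_cons, List.sum_cons, List.map_map]
        simp only [Function.comp_def]
        rw [add_sub_cancel_right]
      have hphi : φ (Finsupp.single tt (1 : K)) =
          Finsupp.single (RT.deg w t₀ + RT.deg w s) (c₀ * cS * (lam * ((RT.deg w s : ℕ) : K) - mu))
            - E • Finsupp.single (RT.deg w tt) 1 := by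
        rw [hmain, map_sub, hmor, hc₀, hcS, Finsupp.smul_single', Finsupp.smul_single',
          mul_one, mul_one, fdbMul_single, map_list_sum, List.map_map]
        congr 1
      refine ⟨c₀ * cS * (lam * ((RT.deg w s : ℕ) : K) - mu) - E, ?_, ?_⟩
      · rw [hphi, hdeg, sub_smul]
        congr 1
        rw [Finsupp.smul_single', mul_one]
      · intro _
        exact ⟨-(c₀ * cS) - d, by rw [hEd, hlam]; ring⟩


/-- With `λ = 0`, the pre-Lie morphism `φ : g_CK^J → g_FdB` (the unique one with
`φ(•_j) = e_j`, where `e_i ∘ e_j = −μ e_{i+j}`) is surjective if and only if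
(`μ ≠ 0` and `1 ∈ J`) or `J = ℕ*`. -/
theorem phi_surjective_iff_of_lam_eq_zero (K : Type*) [Field K] [CharZero K] (lam mu : K)
    (hlam : lam = 0) (J : Set ℕ+)
    (φ : (RT J →₀ K) →ₗ[K] (ℕ+ →₀ K))
    (hgen : ∀ j : J, φ (Finsupp.single (RT.node j []) 1) = Finsupp.single (j : ℕ+) 1)
    (hmor : ∀ x y : RT J →₀ K, φ (gprod K x y) = fdbMul K lam mu (φ x) (φ y)) :
    Function.Surjective φ ↔ ((mu ≠ 0 ∧ (1 : ℕ+) ∈ J) ∨ J = Set.univ) := by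
  set w : J → ℕ+ := fun j : J => (j : ℕ+) with hwdef
  constructor
  · intro hsurj
    by_contra hcon
    push_neg at hcon
    obtain ⟨hcon1, hJ⟩ := hcon
    choose cf hcf hcmu using key_lemma lam mu hlam J φ hgen hmor
    have heval : ∀ n : ℕ+, (∀ t : RT J, cf t = 0 ∨ RT.deg w t ≠ n) →
        ∀ x : RT J →₀ K, φ x n = 0 := by
      intro n hn x
      have hx : φ x = x.sum fun t a => a • φ (Finsupp.single t 1) := by
        conv_lhs => rw [← Finsupp.sum_single x]
        rw [map_finsuppSum]
        refine Finsupp.sum_congr fun t _ => ?_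
        rw [← map_smul, Finsupp.smul_single', mul_one]
      rw [hx, Finsupp.sum_apply, Finsupp.sum]
      apply Finset.sum_eq_zero
      intro t _
      rw [hcf t]
      rcases hn t with h0 | hne
      · rw [h0]; simp
      · rw [Finsupp.smul_apply, Finsupp.smul_apply, Finsupp.single_eq_of_ne' hne]
        simp
    by_cases h1 : (1 : ℕ+) ∈ J
    · have hmu : mu = 0 := by
        by_contra h; exact (hcon1 h) h1
      obtain ⟨n, hn⟩ : ∃ n : ℕ+, n ∉ J := by
        by_contra h; push_neg at h; exact hJ (Set.eq_univ_of_forall h)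
      obtain ⟨x, hxeq⟩ := hsurj (Finsupp.single n 1)
      have h0 := heval n ?_ x
      · rw [hxeq, Finsupp.single_eq_same] at h0
        exact one_ne_zero h0
      · intro t
        obtain ⟨j, cs⟩ := t
        match cs with
        | [] =>
          right
          intro hd
          apply hn
          have hj : RT.deg w (RT.node j ([] : List (RT J))) = (j : ℕ+) := by
            apply PNat.coe_injective
            show RT.degN w (RT.node j []) = _
            rw [RT.degN, RT.degListN]
            rfl
          rw [← hd, hj]
          exact j.2
        | t₀ :: c =>
          left
          obtain ⟨d, hd⟩ := hcmu (RT.node j (t₀ :: c)) (by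
            rw [RT.nv, RT.nvList]
            have := RT.nv_pos t₀
            omega)
          rw [hd, hmu, mul_zero]
    · obtain ⟨x, hxeq⟩ := hsurj (Finsupp.single 1 1)
      have h0 := heval 1 ?_ x
      · rw [hxeq, Finsupp.single_eq_same] at h0
        exact one_ne_zero h0
      · intro t
        right
        obtain ⟨j, cs⟩ := t
        intro hd
        apply h1
        have hdn : RT.degN w (RT.node j cs) = 1 := by
          have := congrArg (PNat.val) hd
          exact this
        rw [RT.degN] at hdn
        have hdn' : ((j : ℕ+) : ℕ) + RT.degListN w cs = 1 := hdn
        have hj1 : ((j : ℕ+) : ℕ) = 1 := by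
          have hp : 0 < ((j : ℕ+) : ℕ) := (j : ℕ+).2
          omega
        have : (j : ℕ+) = 1 := PNat.coe_injective hj1
        rw [← this]
        exact j.2
  · intro h
    suffices hs : ∀ n : ℕ+, Finsupp.single n (1 : K) ∈ LinearMap.range φ by
      intro y
      have hy : y ∈ LinearMap.range φ := by
        rw [← Finsupp.sum_single y, Finsupp.sum]
        refine Submodule.sum_mem _ fun i _ => ?_
        have := Submodule.smul_mem (LinearMap.range φ) (y i) (hs i)
        rwa [Finsupp.smul_single', mul_one] at this
      exact hy
    rcases h with ⟨hmu, h1⟩ | hJ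
    · set j1 : J := ⟨1, h1⟩ with hj1
      set Lad : ℕ → RT J := fun n => Nat.rec (RT.node j1 []) (fun _ ih => RT.node j1 [ih]) n
        with hLad
      have hlad : ∀ n : ℕ, φ (Finsupp.single (Lad n) 1)
          = ((-mu) ^ n) • Finsupp.single n.succPNat 1 := by
        intro n
        induction n with
        | zero =>
          rw [pow_zero, one_smul]
          have := hgen j1
          convert this using 2
          all_goals rfl
        | succ n ihn =>
          have hg : RT.graftings (Lad n) (RT.node j1 []) = [Lad (n + 1)] := by
            rw [RT.graftings, RT.graftingsList]
            simp [hLad]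
          have hsing : Finsupp.single (Lad (n + 1)) (1 : K) =
              gprod K (Finsupp.single (Lad n) 1) (Finsupp.single (RT.node j1 []) 1) := by
            rw [gprod_single, hg]
            simp
          have hadd : n.succPNat + ((j1 : ℕ+)) = (n + 1).succPNat := by
            apply PNat.coe_injective
            rw [PNat.add_coe]
            simp [Nat.succPNat, hj1]
          rw [hsing, hmor, ihn, hgen j1, Finsupp.smul_single', mul_one, fdbMul_single,
            hadd, Finsupp.smul_single']
          congr 1
          have hco : (((j1 : ℕ+) : ℕ) : K) = 1 := by norm_num [hj1]
          rw [hco, hlam]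
          ring
      intro n
      refine ⟨((-mu) ^ n.natPred)⁻¹ • Finsupp.single (Lad n.natPred) 1, ?_⟩
      rw [map_smul, hlad, smul_smul,
        inv_mul_cancel₀ (pow_ne_zero _ (neg_ne_zero.mpr hmu)), one_smul,
        PNat.succPNat_natPred]
    · intro n
      have hnJ : n ∈ J := by rw [hJ]; trivial
      exact ⟨Finsupp.single (RT.node ⟨n, hnJ⟩ []) 1, hgen ⟨n, hnJ⟩⟩
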